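/- Let n ≥ 2, k > 0, r₀ > 0 and β > 0. There is a constant c, depending only on n, k and β, with the following property: if μ is a finite Borel measure on ℂⁿ satisfying the wedge condition with constants k, r₀, then for every z = (s₁e^{iα₁},…,sₙe^{iαₙ}) ∈ ℂⁿ with s_j ≥ β for all j, and every γ with 0 < γ < min(r₀, β/4), one has μ({z}) = 0 and ∫_{W_γ(z)} ‖z−ζ‖^{2−2n} dμ(ζ) ≤ cγ, where W_γ(z) = ∏_{j=1}^n W(s_j,α_j,γ). -/

import Mathlib

open MeasureTheory Metric Complex Set

noncomputable section

/-- ℂⁿ, identified with ℝ^{2n} as a Euclidean space. -/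
abbrev Cn (n : ℕ) := EuclideanSpace ℂ (Fin n)

instance (n : ℕ) : MeasurableSpace (Cn n) := borel _
instance (n : ℕ) : BorelSpace (Cn n) := ⟨rfl⟩

/-- The truncated wedge W(s,α,γ) ⊆ ℂ. -/
def wedge (s α γ : ℝ) : Set ℂ :=
  {z | ∃ ρ φ : ℝ, 0 ≤ ρ ∧ |ρ - s| ≤ γ ∧ |φ - α| ≤ γ ∧ z = ρ * Complex.exp (Complex.I * φ)}

/-- The poly-wedge ∏_{j=1}^n W(s_j, α_j, γ) ⊆ ℂⁿ. -/
def polyWedge (n : ℕ) (s α : Fin n → ℝ) (γ : ℝ) : Set (Cn n) :=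
  {z | ∀ j, z j ∈ wedge (s j) (α j) γ}

/-- The wedge condition for a measure μ on ℂⁿ with constants k, r₀. -/
def WedgeCondition (n : ℕ) (μ : Measure (Cn n)) (k r₀ : ℝ) : Prop :=
  ∀ (s α : Fin n → ℝ), (∀ j, 0 ≤ s j) → (∀ j, α j ∈ Set.Ico 0 (2 * Real.pi)) →
    ∀ γ : ℝ, 0 < γ → γ < r₀ →
      μ (polyWedge n s α γ) ≤ ENNReal.ofReal (k * γ ^ (2 * n - 1))

/-- The constant c_{2n} = Γ(n-1)/(2π)ⁿ. -/
def newtonC (n : ℕ) : ℝ := Real.Gamma ((n : ℝ) - 1) / (2 * Real.pi) ^ n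

/-- The Newtonian potential of μ on ℂⁿ ≅ ℝ^{2n}. -/
def newtonPot (n : ℕ) (μ : Measure (Cn n)) (w : Cn n) : ℝ :=
  ∫ ζ, newtonC n * ‖w - ζ‖ ^ ((2 : ℝ) - 2 * n) ∂μ

/-- The Newtonian potential of μ, as a `ℝ≥0∞`-valued integral. -/
def newtonPotL (n : ℕ) (μ : Measure (Cn n)) (w : Cn n) : ENNReal :=
  ∫⁻ ζ, ENNReal.ofReal (newtonC n * ‖w - ζ‖ ^ ((2 : ℝ) - 2 * n)) ∂μ

/-- The point (s₁ e^{iα₁}, …, sₙ e^{iαₙ}) ∈ ℂⁿ. -/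
def mkPt (n : ℕ) (s α : Fin n → ℝ) : Cn n :=
  (WithLp.equiv 2 (Fin n → ℂ)).symm (fun j => (s j : ℂ) * Complex.exp (Complex.I * α j))

/-- The map Φ(θ, r, w₂, …, wₙ) = (r/√(1+Σ|w_j|²))·(e^{iθ}, e^{iθ}w̄₂, …, e^{iθ}w̄ₙ). -/
def Phi (n : ℕ) (θ r : ℝ) (w : Fin (n - 1) → ℂ) : Cn n :=
  (WithLp.equiv 2 (Fin n → ℂ)).symm (fun i =>
    ((r / Real.sqrt (1 + ∑ j, ‖w j‖ ^ 2) : ℝ) : ℂ) * Complex.exp (Complex.I * θ) *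
      (if h : (i : ℕ) = 0 then 1
       else (starRingEnd ℂ) (w ⟨(i : ℕ) - 1, by have := i.isLt; omega⟩)))

/-- The Stoltz domain C_{θ,r}: convex hull of {θ} ∪ closedBall 0 r. -/
def stoltz (n : ℕ) (θ : Cn n) (r : ℝ) : Set (Cn n) :=
  convexHull ℝ ({θ} ∪ closedBall 0 r)

/-- The Poisson kernel h_θ(w) = (1-‖w‖²)/‖θ-w‖^{2n} for the unit ball of ℂⁿ. -/
def poisson (n : ℕ) (θ w : Cn n) : ℝ :=
  (1 - ‖w‖ ^ 2) / ‖θ - w‖ ^ (2 * n)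

/-- u : 𝔹 → ℝ is pluriharmonic if it is the real part of a holomorphic function on 𝔹. -/
def Pluriharmonic (n : ℕ) (u : Cn n → ℝ) : Prop :=
  ∃ f : Cn n → ℂ, DifferentiableOn ℂ f (ball 0 1) ∧ ∀ z ∈ ball (0 : Cn n) 1, u z = (f z).re

end

noncomputable section AuxLemmas

open Filter Topology

lemma chord_sq (ρ s φ α : ℝ) :
    ‖(ρ:ℂ) * Complex.exp (Complex.I * φ) - (s:ℂ) * Complex.exp (Complex.I * α)‖ ^ 2
      = ρ^2 + s^2 - 2*ρ*s*Real.cos (φ - α) := by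
  have h1 : (ρ:ℂ) * Complex.exp (Complex.I * φ) - (s:ℂ) * Complex.exp (Complex.I * α)
      = ((ρ * Real.cos φ - s * Real.cos α : ℝ) : ℂ)
        + ((ρ * Real.sin φ - s * Real.sin α : ℝ) : ℂ) * Complex.I := by
    rw [mul_comm Complex.I (φ:ℂ), mul_comm Complex.I (α:ℂ), Complex.exp_mul_I, Complex.exp_mul_I,
      ← Complex.ofReal_cos, ← Complex.ofReal_sin, ← Complex.ofReal_cos, ← Complex.ofReal_sin]
    push_cast
    ring
  rw [h1, Complex.sq_norm, Complex.normSq_add_mul_I, Real.cos_sub]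
  linear_combination ρ^2 * Real.sin_sq_add_cos_sq φ + s^2 * Real.sin_sq_add_cos_sq α

lemma coord_norm_le {n : ℕ} (x : Cn n) (j : Fin n) : ‖x j‖ ≤ ‖x‖ := by
  rw [EuclideanSpace.norm_eq]
  have h : ‖x j‖ ^ 2 ≤ ∑ i, ‖x i‖ ^ 2 :=
    Finset.single_le_sum (f := fun i => ‖x i‖ ^ 2) (fun i _ => sq_nonneg _) (Finset.mem_univ j)
  calc ‖x j‖ = Real.sqrt (‖x j‖ ^ 2) := (Real.sqrt_sq (norm_nonneg _)).symm
    _ ≤ _ := Real.sqrt_le_sqrt h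

lemma norm_exp_I_mul (a : ℝ) : ‖Complex.exp (Complex.I * a)‖ = 1 := by
  exact Complex.norm_exp_I_mul_ofReal a

lemma mkPt_apply {n : ℕ} (s α : Fin n → ℝ) (j : Fin n) :
    mkPt n s α j = (s j : ℂ) * Complex.exp (Complex.I * α j) := rfl

lemma sub_apply' {n : ℕ} (x y : Cn n) (j : Fin n) : (x - y) j = x j - y j := rfl

lemma mkPt_mem_polyWedge {n : ℕ} {s : Fin n → ℝ} (α : Fin n → ℝ) (hs : ∀ j, 0 ≤ s j)
    {t : ℝ} (ht : 0 ≤ t) : mkPt n s α ∈ polyWedge n s α t :=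
  fun j => ⟨s j, α j, hs j, by simpa using ht, by simpa using ht, rfl⟩

end AuxLemmas

noncomputable section AuxLemmas2

open Filter Topology

lemma isClosed_wedge (s α γ : ℝ) : IsClosed (wedge s α γ) := by
  have heq : wedge s α γ = (fun p : ℝ × ℝ => (p.1:ℂ) * Complex.exp (Complex.I * p.2)) ''
      {p : ℝ × ℝ | 0 ≤ p.1 ∧ |p.1 - s| ≤ γ ∧ |p.2 - α| ≤ γ} := by
    ext z
    simp only [wedge, Set.mem_image, Set.mem_setOf_eq, Prod.exists]
    constructor
    · rintro ⟨ρ, φ, h1, h2, h3, h4⟩; exact ⟨ρ, φ, ⟨h1, h2, h3⟩, h4.symm⟩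
    · rintro ⟨ρ, φ, ⟨h1, h2, h3⟩, h4⟩; exact ⟨ρ, φ, h1, h2, h3, h4.symm⟩
  rw [heq]
  have hcomp : IsCompact {p : ℝ × ℝ | 0 ≤ p.1 ∧ |p.1 - s| ≤ γ ∧ |p.2 - α| ≤ γ} := by
    refine IsCompact.of_isClosed_subset
      ((isCompact_Icc (a := s - γ) (b := s + γ)).prod
        (isCompact_Icc (a := α - γ) (b := α + γ))) ?_ ?_
    · rw [Set.setOf_and, Set.setOf_and]
      refine (isClosed_le continuous_const continuous_fst).inter
        (IsClosed.inter ?_ ?_)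
      · exact isClosed_le ((continuous_fst.sub continuous_const).abs) continuous_const
      · exact isClosed_le ((continuous_snd.sub continuous_const).abs) continuous_const
    · rintro ⟨x, y⟩ ⟨h1, h2, h3⟩
      obtain ⟨h2a, h2b⟩ := abs_le.mp h2
      obtain ⟨h3a, h3b⟩ := abs_le.mp h3
      exact ⟨⟨by linarith, by linarith⟩, ⟨by linarith, by linarith⟩⟩
  exact (hcomp.image (by fun_prop)).isClosed

lemma measurableSet_polyWedge (n : ℕ) (s α : Fin n → ℝ) (γ : ℝ) :
    MeasurableSet (polyWedge n s α γ) := by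
  have h : polyWedge n s α γ = ⋂ j, (fun z : Cn n => z j) ⁻¹' wedge (s j) (α j) γ := by
    ext z; simp [polyWedge, Set.mem_iInter]
  rw [h]
  refine MeasurableSet.iInter fun j => ?_
  have hc : Continuous (fun z : Cn n => z j) :=
    (continuous_apply j).comp (PiLp.continuous_ofLp ..)
  exact ((isClosed_wedge _ _ _).preimage hc).measurableSet

lemma norm_exp_sub_exp (φ α : ℝ) :
    ‖Complex.exp (Complex.I * φ) - Complex.exp (Complex.I * α)‖ ≤ |φ - α| := by
  have h2 : ‖Complex.exp (Complex.I * φ) - Complex.exp (Complex.I * α)‖ ^ 2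
      = 2 - 2 * Real.cos (φ - α) := by
    have := chord_sq 1 1 φ α
    rw [show (1:ℝ)^2 + 1^2 = 2 by norm_num] at this
    simpa using this
  refine le_of_pow_le_pow_left₀ two_ne_zero (abs_nonneg _) ?_
  rw [h2, _root_.sq_abs]
  nlinarith [Real.one_sub_sq_div_two_le_cos (x := φ - α)]

lemma wedge_dist {s α t : ℝ} (hs : 0 ≤ s) (ht : 0 ≤ t) {z : ℂ} (hz : z ∈ wedge s α t) :
    ‖z - (s:ℂ) * Complex.exp (Complex.I * α)‖ ≤ t + (s + t) * t := by
  obtain ⟨ρ, φ, hρ0, hρ, hφ, rfl⟩ := hz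
  obtain ⟨hρa, hρb⟩ := abs_le.mp hρ
  have htri : ‖(ρ:ℂ) * Complex.exp (Complex.I*φ) - (s:ℂ) * Complex.exp (Complex.I*α)‖
      ≤ ‖(ρ:ℂ) * Complex.exp (Complex.I*φ) - (ρ:ℂ) * Complex.exp (Complex.I*α)‖
        + ‖(ρ:ℂ) * Complex.exp (Complex.I*α) - (s:ℂ) * Complex.exp (Complex.I*α)‖ := by
    have := dist_triangle ((ρ:ℂ) * Complex.exp (Complex.I*φ))
      ((ρ:ℂ) * Complex.exp (Complex.I*α)) ((s:ℂ) * Complex.exp (Complex.I*α))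
    simpa [dist_eq_norm] using this
  have h1 : ‖(ρ:ℂ) * Complex.exp (Complex.I*φ) - (ρ:ℂ) * Complex.exp (Complex.I*α)‖
      ≤ (s + t) * t := by
    rw [← mul_sub, norm_mul, Complex.norm_real, Real.norm_eq_abs, _root_.abs_of_nonneg hρ0]
    have hne := norm_exp_sub_exp φ α
    have h3 : ρ ≤ s + t := by linarith
    exact mul_le_mul h3 (hne.trans hφ) (norm_nonneg _) (by linarith)
  have h2' : ‖(ρ:ℂ) * Complex.exp (Complex.I*α) - (s:ℂ) * Complex.exp (Complex.I*α)‖ ≤ t := by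
    rw [← sub_mul, norm_mul, norm_exp_I_mul, mul_one]
    have : ((ρ:ℂ) - (s:ℂ)) = ((ρ - s : ℝ) : ℂ) := by push_cast; ring
    rw [this, Complex.norm_real, Real.norm_eq_abs]
    exact hρ
  linarith

lemma cover_lemma {n : ℕ} (s α : Fin n → ℝ) {γ : ℝ} (hγ : 0 < γ) (hs : ∀ j, 0 ≤ s j) :
    polyWedge n s α γ ⊆ {mkPt n s α} ∪
      ⋃ m : ℕ, (polyWedge n s α (γ / 2 ^ m) \ polyWedge n s α (γ / 2 ^ (m+1))) := by
  classical
  intro ζ hζ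
  by_cases hall : ∀ m : ℕ, ζ ∈ polyWedge n s α (γ / 2 ^ m)
  · refine Set.mem_union_left _ ?_
    have hcoord : ∀ j, ζ j = (s j : ℂ) * Complex.exp (Complex.I * α j) := by
      intro j
      have hb : ∀ m : ℕ, ‖ζ j - (s j : ℂ) * Complex.exp (Complex.I * α j)‖
          ≤ γ/2^m + (s j + γ/2^m) * (γ/2^m) :=
        fun m => wedge_dist (hs j) (by positivity) (hall m j)
      have h0 : Tendsto (fun m : ℕ => γ / 2 ^ m) atTop (nhds (0:ℝ)) := by
        have := (tendsto_pow_atTop_nhds_zero_of_lt_one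
          (by norm_num : (0:ℝ) ≤ 1/2) (by norm_num : (1:ℝ)/2 < 1)).const_mul γ
        rw [mul_zero] at this
        refine this.congr fun m => ?_
        rw [div_pow, one_pow, mul_one_div]
      have htend : Tendsto (fun m : ℕ => γ/2^m + (s j + γ/2^m) * (γ/2^m)) atTop (nhds 0) := by
        have := h0.add (((tendsto_const_nhds (x := s j)).add h0).mul h0)
        simpa using this
      have hle : ‖ζ j - (s j : ℂ) * Complex.exp (Complex.I * α j)‖ ≤ 0 :=
        ge_of_tendsto' htend hb
      have := le_antisymm hle (norm_nonneg _)
      rwa [norm_eq_zero, sub_eq_zero] at this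
    have hzeq : ζ = mkPt n s α := by
      ext j; exact hcoord j
    simp [hzeq]
  · push_neg at hall
    refine Set.mem_union_right _ ?_
    have hex : ∃ m, ζ ∉ polyWedge n s α (γ / 2 ^ m) := hall
    have h₀ : ζ ∉ polyWedge n s α (γ / 2 ^ (Nat.find hex)) := Nat.find_spec hex
    have hm₀ : Nat.find hex ≠ 0 := by
      intro h
      apply h₀
      rw [h]
      simpa using hζ
    have hprev : ζ ∈ polyWedge n s α (γ / 2 ^ (Nat.find hex - 1)) := by
      by_contra hc
      exact Nat.find_min hex (by omega) hc
    refine Set.mem_iUnion.mpr ⟨Nat.find hex - 1, hprev, ?_⟩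
    rw [show Nat.find hex - 1 + 1 = Nat.find hex by omega]
    exact h₀

end AuxLemmas2

noncomputable section AuxLemmas3

open Filter Topology

lemma key_alg {n : ℕ} (hn : 2 ≤ n) (k : ℝ) {c₁ t : ℝ} (hc₁ : 0 < c₁) (ht : 0 < t) :
    (c₁ * (t/2)) ^ ((2:ℝ) - 2*n) * (k * t ^ (2*n-1))
      = (k * (c₁/2) ^ ((2:ℝ) - 2*n)) * t := by
  have hcast : ((2*n - 1 : ℕ) : ℝ) = 2*(n:ℝ) - 1 := by
    rw [Nat.cast_sub (by omega : 1 ≤ 2*n)]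
    push_cast; ring
  have h1 : c₁ * (t/2) = (c₁/2) * t := by ring
  have h2 : t ^ ((2:ℝ) - 2*n) * t ^ (2*(n:ℝ) - 1) = t := by
    rw [← Real.rpow_add ht]
    rw [show (2:ℝ) - 2*(n:ℝ) + (2*(n:ℝ) - 1) = 1 by ring, Real.rpow_one]
  rw [h1, Real.mul_rpow (by positivity) ht.le, ← Real.rpow_natCast t (2*n-1), hcast]
  calc (c₁/2) ^ ((2:ℝ) - 2*(n:ℝ)) * t ^ ((2:ℝ) - 2*(n:ℝ)) * (k * t ^ (2*(n:ℝ) - 1))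
      = k * (c₁/2) ^ ((2:ℝ) - 2*(n:ℝ)) * (t ^ ((2:ℝ) - 2*(n:ℝ)) * t ^ (2*(n:ℝ) - 1)) := by
        ring
    _ = (k * (c₁/2) ^ ((2:ℝ) - 2*(n:ℝ))) * t := by rw [h2]

lemma sep_lemma {n : ℕ} {s α : Fin n → ℝ} {β t : ℝ} (hβ : 0 < β) (hs : ∀ j, β ≤ s j)
    (ht : 0 < t) (ht4 : t < β / 4) {ζ : Cn n}
    (h1 : ζ ∈ polyWedge n s α t) (h2 : ζ ∉ polyWedge n s α (t / 2)) :
    min 1 (β / Real.pi) * (t / 2) ≤ ‖mkPt n s α - ζ‖ := by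
  have hπ : (0:ℝ) < Real.pi := Real.pi_pos
  have h2π : (0:ℝ) < 2 * Real.pi := Real.two_pi_pos
  have hq0 : (0:ℝ) ≤ t / 2 := by linarith
  obtain ⟨j, hj⟩ : ∃ j, ζ j ∉ wedge (s j) (α j) (t / 2) := by
    by_contra hc; push_neg at hc; exact h2 hc
  obtain ⟨ρ, φ, hρ0, hρ, hφ, hzj⟩ := h1 j
  obtain ⟨hρa, hρb⟩ := abs_le.mp hρ
  set d : ℝ := toIocMod h2π (-Real.pi) (φ - α j) with hd_def
  set m : ℤ := toIocDiv h2π (-Real.pi) (φ - α j) with hm_def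
  have hdIoc : d ∈ Set.Ioc (-Real.pi) (-Real.pi + 2 * Real.pi) := toIocMod_mem_Ioc h2π _ _
  have hdabs : |d| ≤ Real.pi := by
    rw [abs_le]
    constructor
    · linarith [hdIoc.1]
    · linarith [hdIoc.2]
  have hrep : φ = α j + d + (m : ℝ) * (2 * Real.pi) := by
    have : d = (φ - α j) - m • (2 * Real.pi) := rfl
    rw [zsmul_eq_mul] at this
    linarith [this]
  have hexp : Complex.exp (Complex.I * (φ:ℝ)) = Complex.exp (Complex.I * ((α j + d : ℝ) : ℂ)) := by
    rw [Complex.exp_eq_exp_iff_exists_int]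
    refine ⟨m, ?_⟩
    have hc : (φ : ℂ) = ((α j : ℝ) : ℂ) + (d : ℂ) + (m : ℂ) * (2 * (Real.pi : ℂ)) := by
      exact_mod_cast congrArg (fun x : ℝ => (x : ℂ)) hrep
    push_cast
    linear_combination Complex.I * hc
  have hkey : t/2 < |ρ - s j| ∨ t/2 < |d| := by
    by_contra hcon
    push_neg at hcon
    refine hj ⟨ρ, α j + d, hρ0, hcon.1, by simpa using hcon.2, ?_⟩
    rw [hzj, hexp]
  -- the j-th coordinate of the difference
  have happ : (mkPt n s α - ζ) j
      = (s j : ℂ) * Complex.exp (Complex.I * (α j : ℝ))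
        - (ρ : ℂ) * Complex.exp (Complex.I * ((α j + d : ℝ) : ℂ)) := by
    rw [sub_apply', mkPt_apply, hzj, hexp]
  set Y : ℝ := ‖(mkPt n s α - ζ) j‖ with hY_def
  have hYle : Y ≤ ‖mkPt n s α - ζ‖ := coord_norm_le _ j
  have hYsq : Y ^ 2 = (s j)^2 + ρ^2 - 2*(s j)*ρ*Real.cos d := by
    rw [hY_def, happ, chord_sq (s j) ρ (α j) (α j + d)]
    rw [show α j - (α j + d) = -d by ring, Real.cos_neg]
  have hsj : β ≤ s j := hs j
  rcases hkey with hrad | hang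
  · -- radial case
    have hq2 : (t/2)^2 ≤ Y^2 := by
      have h5 : (t/2)^2 ≤ |ρ - s j|^2 := pow_le_pow_left₀ hq0 hrad.le 2
      rw [_root_.sq_abs] at h5
      nlinarith [Real.cos_le_one d, mul_nonneg (show (0:ℝ) ≤ s j by linarith) hρ0]
    have hYq : t/2 ≤ Y := le_of_pow_le_pow_left₀ two_ne_zero (norm_nonneg _) hq2
    calc min 1 (β / Real.pi) * (t/2) ≤ 1 * (t/2) :=
          mul_le_mul_of_nonneg_right (min_le_left _ _) hq0
      _ = t/2 := one_mul _
      _ ≤ Y := hYq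
      _ ≤ _ := hYle
  · -- angular case
    have hρ34 : 3*β/4 ≤ ρ := by linarith
    have hπ2 : (0:ℝ) < Real.pi^2 := by positivity
    have hcos : Real.cos d ≤ 1 - 2/Real.pi^2 * d^2 := Real.cos_le_one_sub_mul_cos_sq hdabs
    have hcos2 : Real.pi^2 * Real.cos d ≤ Real.pi^2 - 2*d^2 := by
      have h := mul_le_mul_of_nonneg_left hcos (le_of_lt hπ2)
      have heq2 : Real.pi^2 * (2/Real.pi^2*d^2) = 2*d^2 := by field_simp
      nlinarith [h, heq2]
    have hd2 : (t/2)^2 ≤ d^2 := by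
      rw [← _root_.sq_abs d]
      exact pow_le_pow_left₀ hq0 hang.le 2
    have hsρ : 0 ≤ s j * ρ := mul_nonneg (by linarith) hρ0
    have hsρ2 : β*(3*β/4) ≤ s j * ρ := mul_le_mul hsj hρ34 (by linarith) (by linarith)
    have hYsq2 : Y^2 * Real.pi^2 = (s j^2 + ρ^2 - 2*(s j*ρ)*Real.cos d) * Real.pi^2 := by
      rw [hYsq]; ring
    have e1 : 2*(s j*ρ)*(Real.pi^2*Real.cos d) ≤ 2*(s j*ρ)*(Real.pi^2 - 2*d^2) :=
      mul_le_mul_of_nonneg_left hcos2 (by linarith)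
    have e2 : (s j*ρ)*(t/2)^2 ≤ (s j*ρ)*d^2 := mul_le_mul_of_nonneg_left hd2 hsρ
    have e3 : (β*(3*β/4))*(t/2)^2 ≤ (s j*ρ)*(t/2)^2 :=
      mul_le_mul_of_nonneg_right hsρ2 (sq_nonneg _)
    have e4 : (0:ℝ) ≤ (s j - ρ)^2 * Real.pi^2 := mul_nonneg (sq_nonneg _) (le_of_lt hπ2)
    have e5 : (0:ℝ) ≤ β^2*(t/2)^2 := by positivity
    have hP : β^2 * (t/2)^2 ≤ Y^2 * Real.pi^2 := by
      linarith [hYsq2, e1, e2, e3, e4, e5]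
    have hYq : β/Real.pi * (t/2) ≤ Y := by
      refine le_of_pow_le_pow_left₀ two_ne_zero (norm_nonneg _) ?_
      rw [mul_pow, div_pow, div_mul_eq_mul_div, div_le_iff₀ hπ2]
      exact hP
    calc min 1 (β / Real.pi) * (t/2) ≤ (β/Real.pi) * (t/2) :=
          mul_le_mul_of_nonneg_right (min_le_right _ _) hq0
      _ ≤ Y := hYq
      _ ≤ _ := hYle

end AuxLemmas3

noncomputable section

open Filter Topology

theorem stmt5 (n : ℕ) (hn : 2 ≤ n) (k β : ℝ) (hk : 0 < k) (hβ : 0 < β) :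
    ∃ c : ℝ, ∀ r₀ : ℝ, 0 < r₀ → ∀ μ : Measure (Cn n), IsFiniteMeasure μ →
      WedgeCondition n μ k r₀ →
      ∀ s α : Fin n → ℝ, (∀ j, β ≤ s j) → (∀ j, α j ∈ Set.Ico (0 : ℝ) (2 * Real.pi)) →
        ∀ γ : ℝ, 0 < γ → γ < min r₀ (β / 4) →
          μ {mkPt n s α} = 0 ∧
          ∫⁻ ζ in polyWedge n s α γ, ENNReal.ofReal (‖mkPt n s α - ζ‖ ^ ((2 : ℝ) - 2 * n)) ∂μ ≤
            ENNReal.ofReal (c * γ) := by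
  classical
  have hπ : (0:ℝ) < Real.pi := Real.pi_pos
  set c₁ : ℝ := min 1 (β / Real.pi) with hc₁
  have hc₁pos : 0 < c₁ := lt_min one_pos (by positivity)
  set K : ℝ := k * (c₁ / 2) ^ ((2:ℝ) - 2 * n) with hK
  have hKpos : 0 < K := mul_pos hk (Real.rpow_pos_of_pos (by positivity) _)
  refine ⟨2 * K, ?_⟩
  intro r₀ hr₀ μ _ hW s α hs hα γ hγ hγlt
  have hγr : γ < r₀ := lt_of_lt_of_le hγlt (min_le_left _ _)
  have hγβ : γ < β / 4 := lt_of_lt_of_le hγlt (min_le_right _ _)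
  have hs0 : ∀ j, 0 ≤ s j := fun j => le_trans hβ.le (hs j)
  have hμW : ∀ t : ℝ, 0 < t → t ≤ γ → μ (polyWedge n s α t) ≤ ENNReal.ofReal (k * t ^ (2*n - 1)) :=
    fun t ht htγ => hW s α hs0 hα t ht (lt_of_le_of_lt htγ hγr)
  have h2e : ((2:ℝ) - 2 * n) ≤ 0 := by
    have : (2:ℝ) ≤ (n:ℝ) := by exact_mod_cast hn
    linarith
  -- singleton has measure zero
  have hsing : μ {mkPt n s α} = 0 := by
    have hb : ∀ m : ℕ, μ {mkPt n s α} ≤ ENNReal.ofReal (k * (γ / 2 ^ (m+1)) ^ (2*n-1)) := by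
      intro m
      refine le_trans (measure_mono ?_) (hμW _ (by positivity) ?_)
      · intro x hx
        rw [Set.mem_singleton_iff] at hx
        exact hx ▸ mkPt_mem_polyWedge α hs0 (by positivity)
      · rw [div_le_iff₀ (by positivity)]
        have h1 : (1:ℝ) ≤ 2 ^ (m+1) := one_le_pow₀ (by norm_num)
        nlinarith
    have h0 : Tendsto (fun m : ℕ => γ / 2 ^ (m+1)) atTop (nhds (0:ℝ)) := by
      have := (tendsto_pow_atTop_nhds_zero_of_lt_one
        (by norm_num : (0:ℝ) ≤ 1/2) (by norm_num : (1:ℝ)/2 < 1)).const_mul (γ/2)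
      rw [mul_zero] at this
      refine this.congr fun m => ?_
      rw [div_pow, one_pow, pow_succ]
      ring
    have hreal : Tendsto (fun m : ℕ => k * (γ / 2 ^ (m+1)) ^ (2*n-1)) atTop (nhds 0) := by
      have := (h0.pow (2*n-1)).const_mul k
      rw [zero_pow (by omega : 2*n-1 ≠ 0), mul_zero] at this
      exact this
    have htend : Tendsto (fun m : ℕ => ENNReal.ofReal (k * (γ / 2 ^ (m+1)) ^ (2*n-1)))
        atTop (nhds 0) := by
      have := ENNReal.tendsto_ofReal hreal
      simpa using this
    exact le_antisymm (ge_of_tendsto' htend hb) zero_le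
  refine ⟨hsing, ?_⟩
  -- dyadic shells
  set S : ℕ → Set (Cn n) := fun m =>
    polyWedge n s α (γ/2^m) \ polyWedge n s α (γ/2^(m+1)) with hS
  have hSmeas : ∀ m, MeasurableSet (S m) := fun m =>
    (measurableSet_polyWedge n s α _).diff (measurableSet_polyWedge n s α _)
  have hstep : ∀ m : ℕ, (∫⁻ ζ in S m,
      ENNReal.ofReal (‖mkPt n s α - ζ‖ ^ ((2:ℝ) - 2 * n)) ∂μ)
        ≤ ENNReal.ofReal (K * (γ/2^m)) := by
    intro m
    have htpos : 0 < γ/2^m := by positivity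
    have htγ : γ/2^m ≤ γ := by
      rw [div_le_iff₀ (by positivity)]
      have h1 : (1:ℝ) ≤ 2 ^ m := one_le_pow₀ (by norm_num)
      nlinarith
    have ht4 : γ/2^m < β/4 := lt_of_le_of_lt htγ hγβ
    have hhalf : γ / 2^(m+1) = (γ/2^m)/2 := by
      rw [pow_succ, ← div_div]
    have hpt : ∀ ζ ∈ S m, ENNReal.ofReal (‖mkPt n s α - ζ‖ ^ ((2:ℝ) - 2 * n))
        ≤ ENNReal.ofReal ((c₁ * ((γ/2^m)/2)) ^ ((2:ℝ) - 2*n)) := by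
      intro ζ hζ
      have hζ2 : ζ ∉ polyWedge n s α ((γ/2^m)/2) := by
        rw [← hhalf]; exact hζ.2
      have hsep := sep_lemma hβ hs htpos ht4 hζ.1 hζ2
      exact ENNReal.ofReal_le_ofReal
        (Real.rpow_le_rpow_of_nonpos (by positivity) hsep h2e)
    calc (∫⁻ ζ in S m, ENNReal.ofReal (‖mkPt n s α - ζ‖ ^ ((2:ℝ) - 2 * n)) ∂μ)
        ≤ ∫⁻ _ζ in S m, ENNReal.ofReal ((c₁ * ((γ/2^m)/2)) ^ ((2:ℝ) - 2*n)) ∂μ :=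
          setLIntegral_mono' (hSmeas m) hpt
      _ = ENNReal.ofReal ((c₁ * ((γ/2^m)/2)) ^ ((2:ℝ) - 2*n)) * μ (S m) :=
          setLIntegral_const _ _
      _ ≤ ENNReal.ofReal ((c₁ * ((γ/2^m)/2)) ^ ((2:ℝ) - 2*n))
            * ENNReal.ofReal (k * (γ/2^m) ^ (2*n-1)) := by
          gcongr
          exact (le_trans (measure_mono Set.diff_subset) (hμW _ htpos htγ))
      _ = ENNReal.ofReal ((c₁ * ((γ/2^m)/2)) ^ ((2:ℝ) - 2*n) * (k * (γ/2^m) ^ (2*n-1))) :=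
          (ENNReal.ofReal_mul (by positivity)).symm
      _ = ENNReal.ofReal (K * (γ/2^m)) := by
          rw [key_alg hn k hc₁pos htpos]
  have hcover := cover_lemma s α hγ hs0
  have hterm : ∀ m : ℕ, ENNReal.ofReal (K * (γ/2^m))
      = ENNReal.ofReal (K*γ) * (ENNReal.ofReal (1/2))^m := by
    intro m
    rw [← ENNReal.ofReal_pow (by norm_num), ← ENNReal.ofReal_mul (by positivity)]
    congr 1
    rw [div_pow, one_pow]
    ring
  have hhalfE : ENNReal.ofReal (1/2) = 2⁻¹ := by
    rw [ENNReal.ofReal_div_of_pos (by norm_num)]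
    norm_num
  have hgeom : (∑' m : ℕ, (ENNReal.ofReal (1/2))^m) = 2 := by
    rw [hhalfE, ENNReal.tsum_geometric, ENNReal.one_sub_inv_two, inv_inv]
  calc (∫⁻ ζ in polyWedge n s α γ,
        ENNReal.ofReal (‖mkPt n s α - ζ‖ ^ ((2:ℝ) - 2 * n)) ∂μ)
      ≤ ∫⁻ ζ in ({mkPt n s α} ∪ ⋃ m : ℕ, S m),
          ENNReal.ofReal (‖mkPt n s α - ζ‖ ^ ((2:ℝ) - 2 * n)) ∂μ :=
        lintegral_mono_set hcover
    _ ≤ (∫⁻ ζ in {mkPt n s α},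
          ENNReal.ofReal (‖mkPt n s α - ζ‖ ^ ((2:ℝ) - 2 * n)) ∂μ)
        + ∫⁻ ζ in (⋃ m : ℕ, S m),
            ENNReal.ofReal (‖mkPt n s α - ζ‖ ^ ((2:ℝ) - 2 * n)) ∂μ :=
        lintegral_union_le _ _ _
    _ = ∫⁻ ζ in (⋃ m : ℕ, S m),
          ENNReal.ofReal (‖mkPt n s α - ζ‖ ^ ((2:ℝ) - 2 * n)) ∂μ := by
        rw [Measure.restrict_eq_zero.mpr hsing, lintegral_zero_measure, zero_add]
    _ ≤ ∑' m : ℕ, ∫⁻ ζ in S m,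
          ENNReal.ofReal (‖mkPt n s α - ζ‖ ^ ((2:ℝ) - 2 * n)) ∂μ :=
        lintegral_iUnion_le _ _
    _ ≤ ∑' m : ℕ, ENNReal.ofReal (K * (γ/2^m)) := ENNReal.tsum_le_tsum hstep
    _ = ENNReal.ofReal (K*γ) * ∑' m : ℕ, (ENNReal.ofReal (1/2))^m := by
        simp_rw [hterm]
        rw [ENNReal.tsum_mul_left]
    _ = ENNReal.ofReal (K*γ) * 2 := by rw [hgeom]
    _ = ENNReal.ofReal (2 * K * γ) := by
        rw [← ENNReal.ofReal_ofNat 2, ← ENNReal.ofReal_mul (by positivity)]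
        congr 1
        ring

end
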